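/- Let s ∈ (0,1/2), let b > 0, and let φ : ℝⁿ → [0,1] be a smooth function with φ(ξ) = 0 for |ξ| < 1 and φ(ξ) = 1 for |ξ| > 2. Define q(ξ) = φ(ξ)/(|ξ|^{2s} + i b ξ_n); q is well defined and smooth because ||ξ|^{2s} + i b ξ_n| ≥ |ξ|^{2s} ≥ 1 whenever φ(ξ) ≠ 0. Then q belongs to the Hörmander class S^{−2s}_{2s,0}: for every multi-index β ∈ ℕⁿ there exists a constant C_β such that |∂_ξ^β q(ξ)| ≤ C_β (1+|ξ|)^{−2s − 2s|β|} for all ξ ∈ ℝⁿ. -/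

import Mathlib

/-- The constant-drift parametrix symbol `q(ξ) = φ(ξ)/(|ξ|^{2s} + i b ξ_n)`. -/
noncomputable def constDriftParametrix {n : ℕ} (s b : ℝ)
    (φ : EuclideanSpace ℝ (Fin (n + 1)) → ℝ) (ξ : EuclideanSpace ℝ (Fin (n + 1))) : ℂ :=
  ((φ ξ : ℝ) : ℂ) /
    (((‖ξ‖ ^ (2 * s) : ℝ) : ℂ) + Complex.I * (b : ℂ) * ((ξ (Fin.last n) : ℝ) : ℂ))

set_option linter.unusedSectionVars false
open Set Finset
noncomputable section
namespace SymbAux2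
variable {E : Type*} [NormedAddCommGroup E] [InnerProductSpace ℝ E]
def UU (E : Type*) [NormedAddCommGroup E] : Set E := {ξ | 1 < ‖ξ‖}
lemma UU_open : IsOpen (UU E) := isOpen_lt continuous_const continuous_norm
lemma UU_ud : UniqueDiffOn ℝ (UU E) := UU_open.uniqueDiffOn

lemma UU_ne {E : Type*} [NormedAddCommGroup E] {ξ : E} (hξ : ξ ∈ UU E) : ξ ≠ 0 := by
  intro h0
  have h1 : (1:ℝ) < ‖ξ‖ := hξ
  rw [h0, norm_zero] at h1
  linarith

def Ft (t : ℝ) : E → ℝ := fun ξ => (‖ξ‖^2 : ℝ) ^ t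

lemma normsq_pos {ξ : E} (hξ : ξ ∈ UU E) : (0:ℝ) < ‖ξ‖^2 := by
  have : (1:ℝ) < ‖ξ‖ := hξ
  positivity

lemma Ft_contDiffOn (t : ℝ) : ContDiffOn ℝ (⊤:ℕ∞) (Ft t : E → ℝ) (UU E) := by
  intro ξ hξ
  exact (((contDiff_norm_sq ℝ).contDiffAt).rpow_const_of_ne
    (ne_of_gt (normsq_pos hξ))).contDiffWithinAt

lemma Ft_rpow (ξ : E) (t : ℝ) : Ft t ξ = ‖ξ‖ ^ (2*t) := by
  rw [Ft, ← Real.rpow_natCast ‖ξ‖ 2, ← Real.rpow_mul (norm_nonneg ξ)]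
  norm_num

lemma Ft_norm {ξ : E} (hξ : ξ ∈ UU E) (t : ℝ) : ‖Ft t ξ‖ = ‖ξ‖ ^ (2*t) := by
  rw [Ft_rpow ξ, Real.norm_eq_abs, abs_of_nonneg]
  have h1 : (1:ℝ) < ‖ξ‖ := hξ
  have : (0:ℝ) < ‖ξ‖ := lt_trans one_pos h1
  positivity

def MM (E : Type*) [NormedAddCommGroup E] [InnerProductSpace ℝ E] :
    E →L[ℝ] (E →L[ℝ] ℝ) := (2:ℝ) • (innerSL ℝ : E →L[ℝ] E →L[ℝ] ℝ)

lemma hasFDerivAt_normsq (x : E) : HasFDerivAt (fun ξ : E => ‖ξ‖^2) (MM E x) x := by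
  have := (hasStrictFDerivAt_norm_sq x).hasFDerivAt
  have e : MM E x = 2 • (innerSL ℝ x) := by
    show (2:ℝ) • (innerSL ℝ x) = _
    rw [two_smul]; rw [two_smul]
  rw [e]; exact this

lemma Ft_fderivWithin (t : ℝ) {ξ : E} (hξ : ξ ∈ UU E) :
    fderivWithin ℝ (Ft t) (UU E) ξ = (t * Ft (t-1) ξ) • MM E ξ := by
  have h : HasFDerivAt (Ft t) ((t * (‖ξ‖^2) ^ (t-1)) • MM E ξ) ξ :=
    (hasFDerivAt_normsq ξ).rpow_const (Or.inl (ne_of_gt (normsq_pos hξ)))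
  exact h.hasFDerivWithinAt.fderivWithin (UU_ud ξ hξ)

lemma MM_apply_norm_le (x : E) : ‖MM E x‖ ≤ 2 * ‖x‖ := by
  have h : ‖(innerSL ℝ : E →L[ℝ] E →L[ℝ] ℝ) x‖ = ‖x‖ := innerSL_apply_norm (𝕜 := ℝ) x
  calc ‖MM E x‖ = ‖(2:ℝ) • (innerSL ℝ : E →L[ℝ] E →L[ℝ] ℝ) x‖ := rfl
  _ ≤ ‖(2:ℝ)‖ * ‖(innerSL ℝ : E →L[ℝ] E →L[ℝ] ℝ) x‖ := ContinuousLinearMap.opNorm_smul_le _ _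
  _ ≤ 2 * ‖x‖ := by rw [h]; simp

lemma MM_norm_le : ‖MM E‖ ≤ 2 := by
  have h : ‖(innerSL ℝ (E := E) : E →L[ℝ] E →L[ℝ] ℝ)‖ ≤ 1 := norm_innerSL_le ℝ
  calc ‖MM E‖ ≤ ‖(2:ℝ)‖ * ‖(innerSL ℝ (E := E) : E →L[ℝ] E →L[ℝ] ℝ)‖ :=
        ContinuousLinearMap.opNorm_smul_le _ _
  _ ≤ 2 := by rw [Real.norm_ofNat]; linarith

variable {F : Type*} [NormedAddCommGroup F] [NormedSpace ℝ F]

lemma clm_iter_norm_le (c : E →L[ℝ] F) {k : ℕ} (hk : 1 ≤ k) (x : E) :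
    ‖iteratedFDeriv ℝ k (⇑c) x‖ ≤ ‖c‖ := by
  obtain ⟨j, rfl⟩ : ∃ j, k = j + 1 := ⟨k - 1, by omega⟩
  have hfd : fderiv ℝ (⇑c) = fun _ : E => c := by funext y; exact c.fderiv
  rw [← norm_iteratedFDeriv_fderiv, hfd]
  rcases Nat.eq_zero_or_pos j with rfl | hj
  · simp [iteratedFDeriv_zero_eq_comp]
  · rw [iteratedFDeriv_const_of_ne (Nat.pos_iff_ne_zero.mp hj)]
    simp [norm_nonneg]

lemma clm_iter_eq_zero (c : E →L[ℝ] F) {k : ℕ} (hk : 2 ≤ k) (x : E) :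
    ‖iteratedFDeriv ℝ k (⇑c) x‖ = 0 := by
  obtain ⟨j, rfl⟩ : ∃ j, k = j + 1 := ⟨k - 1, by omega⟩
  have hfd : fderiv ℝ (⇑c) = fun _ : E => c := by funext y; exact c.fderiv
  rw [← norm_iteratedFDeriv_fderiv, hfd]
  rw [iteratedFDeriv_const_of_ne (by omega : j ≠ 0)]
  simp

lemma MM_iter_bound (k : ℕ) {ξ : E} (hξ : ξ ∈ UU E) :
    ‖iteratedFDerivWithin ℝ k (⇑(MM E)) (UU E) ξ‖ ≤ 2 * ‖ξ‖ ^ ((1:ℝ) - k) := by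
  have h1 : (1:ℝ) < ‖ξ‖ := hξ
  have hpos : (0:ℝ) < ‖ξ‖ := lt_trans one_pos h1
  rw [iteratedFDerivWithin_of_isOpen k UU_open hξ]
  match k, Nat.lt_or_ge k 2 with
  | 0, _ =>
    rw [norm_iteratedFDeriv_zero]
    have e : ((1:ℝ) - ((0:ℕ):ℝ)) = 1 := by norm_num
    rw [e, Real.rpow_one]
    exact MM_apply_norm_le ξ
  | 1, _ =>
    refine (clm_iter_norm_le _ le_rfl ξ).trans ?_
    have e : ((1:ℝ) - ((1:ℕ):ℝ)) = 0 := by norm_num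
    rw [e, Real.rpow_zero, mul_one]
    exact MM_norm_le
  | (j+2), _ =>
    rw [clm_iter_eq_zero _ (by omega) ξ]
    positivity

lemma Ft_iter_bound : ∀ (k : ℕ) (t : ℝ), ∃ C : ℝ, 0 ≤ C ∧ ∀ j ≤ k, ∀ ξ ∈ UU E,
    ‖iteratedFDerivWithin ℝ j (Ft t) (UU E) ξ‖ ≤ C * ‖ξ‖ ^ (2*t - j) := by
  intro k
  induction k with
  | zero =>
    intro t
    refine ⟨1, zero_le_one, ?_⟩
    intro j hj ξ hξ
    interval_cases j
    rw [norm_iteratedFDerivWithin_zero, Ft_norm hξ, one_mul]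
    have e : 2*t - ((0:ℕ):ℝ) = 2*t := by norm_num
    rw [e]
  | succ k IH =>
    intro t
    obtain ⟨C₁, hC₁0, hC₁⟩ := IH t
    obtain ⟨C₂, hC₂0, hC₂⟩ := IH (t-1)
    set S : ℝ := ∑ i ∈ Finset.range (k+1), ((k.choose i : ℕ) : ℝ) with hS
    have hS0 : 0 ≤ S := Finset.sum_nonneg fun i _ => by positivity
    refine ⟨max C₁ (S * (2 * (|t| * C₂))), le_max_of_le_left hC₁0, ?_⟩
    intro j hj ξ hξ
    have h1 : (1:ℝ) < ‖ξ‖ := hξ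
    have hpos : (0:ℝ) < ‖ξ‖ := lt_trans one_pos h1
    have hrp : (0:ℝ) ≤ ‖ξ‖ ^ (2*t - j) := Real.rpow_nonneg (le_of_lt hpos) _
    rcases Nat.lt_or_ge j (k+1) with hjk | hjk
    · exact (hC₁ j (by omega) ξ hξ).trans
        (mul_le_mul_of_nonneg_right (le_max_left _ _) hrp)
    have hj' : j = k+1 := by omega
    subst hj'
    -- rewrite as derivative of fderivWithin
    rw [← norm_iteratedFDerivWithin_fderivWithin (UU_ud (E := E)) hξ]
    rw [iteratedFDerivWithin_congr (fun η hη => Ft_fderivWithin t hη) hξ k]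
    have hf : ContDiffOn ℝ (⊤:ℕ∞) (fun η : E => t * Ft (t-1) η) (UU E) :=
      contDiffOn_const.mul (Ft_contDiffOn (t-1))
    have hg : ContDiffOn ℝ (⊤:ℕ∞) (⇑(MM E)) (UU E) := (MM E).contDiff.contDiffOn
    have lei := norm_iteratedFDerivWithin_smul_le (𝕜 := ℝ) (f := fun η : E => t * Ft (t-1) η)
      (g := ⇑(MM E)) (n := k) hf hg (UU_ud (E := E)) hξ (by exact_mod_cast le_top)
    refine le_trans lei ?_
    have hterm : ∀ i ∈ Finset.range (k+1),
        ((k.choose i : ℕ) : ℝ) * ‖iteratedFDerivWithin ℝ i (fun η : E => t * Ft (t-1) η) (UU E) ξ‖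
          * ‖iteratedFDerivWithin ℝ (k-i) (⇑(MM E)) (UU E) ξ‖
        ≤ ((k.choose i : ℕ) : ℝ) * ((2 * (|t| * C₂)) * ‖ξ‖ ^ (2*t - ((k+1:ℕ):ℝ))) := by
      intro i hi
      have hik : i ≤ k := by simpa using Nat.lt_succ_iff.mp (Finset.mem_range.mp hi)
      -- bound on scalar part
      have hfs : ‖iteratedFDerivWithin ℝ i (fun η : E => t * Ft (t-1) η) (UU E) ξ‖
          ≤ |t| * (C₂ * ‖ξ‖ ^ (2*(t-1) - i)) := by
        have e1 : (fun η : E => t * Ft (t-1) η) = t • (Ft (t-1) : E → ℝ) := by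
          funext η; simp [smul_eq_mul]
        rw [e1, iteratedFDerivWithin_const_smul_apply (i := i)
          ((Ft_contDiffOn (t-1) ξ hξ).of_le (by exact_mod_cast le_top)) (UU_ud (E := E)) hξ]
        refine le_trans (ContinuousMultilinearMap.opNorm_smul_le t _) ?_
        rw [Real.norm_eq_abs]
        exact mul_le_mul_of_nonneg_left (hC₂ i hik ξ hξ) (abs_nonneg t)
      have hgs : ‖iteratedFDerivWithin ℝ (k-i) (⇑(MM E)) (UU E) ξ‖
          ≤ 2 * ‖ξ‖ ^ ((1:ℝ) - (k-i:ℕ)) := MM_iter_bound (k-i) hξ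
      have hcomb : (|t| * (C₂ * ‖ξ‖ ^ (2*(t-1) - i))) * (2 * ‖ξ‖ ^ ((1:ℝ) - (k-i:ℕ)))
          = (2 * (|t| * C₂)) * ‖ξ‖ ^ (2*t - ((k+1:ℕ):ℝ)) := by
        have hexp : 2*t - ((k+1:ℕ):ℝ) = (2*(t-1) - i) + ((1:ℝ) - (k-i:ℕ)) := by
          have : ((k-i:ℕ):ℝ) = (k:ℝ) - (i:ℝ) := by
            rw [Nat.cast_sub hik]
          rw [this]
          push_cast
          ring
        rw [hexp, Real.rpow_add hpos]
        ring
      calc ((k.choose i : ℕ) : ℝ) * ‖iteratedFDerivWithin ℝ i (fun η : E => t * Ft (t-1) η) (UU E) ξ‖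
          * ‖iteratedFDerivWithin ℝ (k-i) (⇑(MM E)) (UU E) ξ‖
          ≤ ((k.choose i : ℕ) : ℝ) * (|t| * (C₂ * ‖ξ‖ ^ (2*(t-1) - i)))
            * (2 * ‖ξ‖ ^ ((1:ℝ) - (k-i:ℕ))) := by
            apply mul_le_mul
            · exact mul_le_mul_of_nonneg_left hfs (by positivity)
            · exact hgs
            · exact norm_nonneg _
            · positivity
      _ = ((k.choose i : ℕ) : ℝ) * ((2 * (|t| * C₂)) * ‖ξ‖ ^ (2*t - ((k+1:ℕ):ℝ))) := by
            rw [mul_assoc, hcomb]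
    refine le_trans (Finset.sum_le_sum hterm) ?_
    rw [← Finset.sum_mul]
    rw [← hS]
    have : S * ((2 * (|t| * C₂)) * ‖ξ‖ ^ (2*t - ((k+1:ℕ):ℝ)))
        = (S * (2 * (|t| * C₂))) * ‖ξ‖ ^ (2*t - ((k+1:ℕ):ℝ)) := by ring
    rw [this]
    exact mul_le_mul_of_nonneg_right (le_max_right _ _) (Real.rpow_nonneg (le_of_lt hpos) _)

section A
variable (s : ℝ) (ℓ : E →L[ℝ] ℂ)

def aF : E → ℂ := fun ξ => ((Ft s ξ : ℝ) : ℂ) + ℓ ξ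
def rF : E → ℂ := fun ξ => (aF s ℓ ξ)⁻¹

variable {s ℓ}

lemma aF_lower (hre : ∀ ξ, (ℓ ξ).re = 0) (ξ : E) :
    ‖ξ‖ ^ (2*s) ≤ ‖aF s ℓ ξ‖ := by
  have hre' : (aF s ℓ ξ).re = Ft s ξ := by
    simp [aF, hre ξ]
  calc ‖ξ‖ ^ (2*s) = Ft s ξ := (Ft_rpow ξ s).symm
  _ ≤ |(aF s ℓ ξ).re| := by rw [hre']; exact le_abs_self _
  _ ≤ ‖aF s ℓ ξ‖ := by exact Complex.abs_re_le_norm _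

lemma aF_pos (hre : ∀ ξ, (ℓ ξ).re = 0) {ξ : E} (hξ : ξ ≠ 0) :
    0 < ‖aF s ℓ ξ‖ := by
  refine lt_of_lt_of_le ?_ (aF_lower hre ξ)
  have : (0:ℝ) < ‖ξ‖ := norm_pos_iff.mpr hξ
  positivity

lemma aF_ne (hre : ∀ ξ, (ℓ ξ).re = 0) {ξ : E} (hξ : ξ ≠ 0) : aF s ℓ ξ ≠ 0 :=
  norm_pos_iff.mp (aF_pos hre hξ)

lemma aF_contDiffOn : ContDiffOn ℝ (⊤:ℕ∞) (aF s ℓ) (UU E) :=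
  (Complex.ofRealCLM.contDiff.comp_contDiffOn (Ft_contDiffOn s)).add ℓ.contDiff.contDiffOn

lemma ofRealCLM_norm_le : ‖Complex.ofRealCLM‖ ≤ 1 := by
  refine ContinuousLinearMap.opNorm_le_bound _ zero_le_one (fun x => ?_)
  simp [Complex.norm_real]

lemma ofReal_Ft_iter (k : ℕ) : ∃ C : ℝ, 0 ≤ C ∧ ∀ j ≤ k, ∀ ξ ∈ UU E,
    ‖iteratedFDerivWithin ℝ j (fun ξ : E => ((Ft s ξ : ℝ) : ℂ)) (UU E) ξ‖
      ≤ C * ‖ξ‖ ^ (2*s - j) := by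
  obtain ⟨C, hC0, hC⟩ := Ft_iter_bound (E := E) k s
  refine ⟨C, hC0, fun j hj ξ hξ => ?_⟩
  have e := Complex.ofRealCLM.iteratedFDerivWithin_comp_left (f := (Ft s : E → ℝ))
    (Ft_contDiffOn s ξ hξ) (UU_ud (E := E)) hξ (i := j) (by exact_mod_cast le_top)
  calc ‖iteratedFDerivWithin ℝ j (fun ξ : E => ((Ft s ξ : ℝ) : ℂ)) (UU E) ξ‖
      = ‖Complex.ofRealCLM.compContinuousMultilinearMap
          (iteratedFDerivWithin ℝ j (Ft s) (UU E) ξ)‖ := by rw [← e]; rfl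
  _ ≤ ‖Complex.ofRealCLM‖ * ‖iteratedFDerivWithin ℝ j (Ft s) (UU E) ξ‖ :=
      ContinuousLinearMap.norm_compContinuousMultilinearMap_le _ _
  _ ≤ 1 * (C * ‖ξ‖ ^ (2*s - j)) := by
      refine mul_le_mul ofRealCLM_norm_le (hC j hj ξ hξ) (norm_nonneg _) zero_le_one
  _ = C * ‖ξ‖ ^ (2*s - j) := one_mul _

lemma A_iter_bound (hs0 : 0 < s) (hs1 : 2*s ≤ 1) (K : ℕ) :
    ∃ C : ℝ, 0 ≤ C ∧ ∀ k ≤ K, ∀ ξ ∈ UU E,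
      ‖iteratedFDerivWithin ℝ k (fderivWithin ℝ (aF s ℓ) (UU E)) (UU E) ξ‖
        ≤ C * ‖ξ‖ ^ (-(2*s)*k) := by
  obtain ⟨C, hC0, hC⟩ := ofReal_Ft_iter (E := E) (s := s) (K+1)
  refine ⟨C + ‖ℓ‖, by positivity, fun k hk ξ hξ => ?_⟩
  have h1 : (1:ℝ) < ‖ξ‖ := hξ
  have hpos : (0:ℝ) < ‖ξ‖ := lt_trans one_pos h1
  rw [norm_iteratedFDerivWithin_fderivWithin (UU_ud (E := E)) hξ]
  -- split the sum
  have hsplit : iteratedFDerivWithin ℝ (k+1) (aF s ℓ) (UU E) ξ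
      = iteratedFDerivWithin ℝ (k+1) (fun ξ : E => ((Ft s ξ : ℝ) : ℂ)) (UU E) ξ
        + iteratedFDerivWithin ℝ (k+1) (⇑ℓ) (UU E) ξ := by
    exact iteratedFDerivWithin_add_apply
      ((Complex.ofRealCLM.contDiff.comp_contDiffOn (Ft_contDiffOn s) ξ hξ).of_le
        (by exact_mod_cast le_top))
      ℓ.contDiff.contDiffWithinAt (UU_ud (E := E)) hξ
  rw [hsplit]
  have hF : ‖iteratedFDerivWithin ℝ (k+1) (fun ξ : E => ((Ft s ξ : ℝ) : ℂ)) (UU E) ξ‖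
      ≤ C * ‖ξ‖ ^ (2*s - (k+1:ℕ)) := hC (k+1) (by omega) ξ hξ
  have hL : ‖iteratedFDerivWithin ℝ (k+1) (⇑ℓ) (UU E) ξ‖ ≤ (if k = 0 then ‖ℓ‖ else 0) := by
    rw [iteratedFDerivWithin_of_isOpen _ UU_open hξ]
    rcases Nat.eq_zero_or_pos k with rfl | hkpos
    · simpa using clm_iter_norm_le ℓ le_rfl ξ
    · simp only [if_neg (Nat.pos_iff_ne_zero.mp hkpos)]
      exact le_of_eq (clm_iter_eq_zero ℓ (by omega) ξ)
  refine le_trans (norm_add_le _ _) ?_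
  have hexp : ‖ξ‖ ^ (2*s - ((k+1:ℕ):ℝ)) ≤ ‖ξ‖ ^ (-(2*s)*k) := by
    refine Real.rpow_le_rpow_of_exponent_le h1.le ?_
    push_cast
    nlinarith [Nat.cast_nonneg (α := ℝ) k]
  rcases Nat.eq_zero_or_pos k with rfl | hkpos
  · have e0 : -(2*s)*((0:ℕ):ℝ) = 0 := by norm_num
    rw [e0, Real.rpow_zero, mul_one]
    have : ‖ξ‖ ^ (2*s - ((0+1:ℕ):ℝ)) ≤ 1 := by
      refine Real.rpow_le_one_of_one_le_of_nonpos h1.le ?_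
      push_cast; linarith
    have hL' : ‖iteratedFDerivWithin ℝ (0+1) (⇑ℓ) (UU E) ξ‖ ≤ ‖ℓ‖ := by simpa using hL
    nlinarith [norm_nonneg (iteratedFDerivWithin ℝ (0+1) (fun ξ : E => ((Ft s ξ : ℝ) : ℂ)) (UU E) ξ), Real.rpow_nonneg hpos.le (2*s - ((0+1:ℕ):ℝ))]
  · simp only [if_neg (Nat.pos_iff_ne_zero.mp hkpos)] at hL
    have h2 : ‖iteratedFDerivWithin ℝ (k+1) (fun ξ : E => ((Ft s ξ : ℝ) : ℂ)) (UU E) ξ‖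
        ≤ C * ‖ξ‖ ^ (-(2*s)*k) := hF.trans (mul_le_mul_of_nonneg_left hexp hC0)
    have hrp : (0:ℝ) ≤ ‖ξ‖ ^ (-(2*s)*k) := Real.rpow_nonneg hpos.le _
    nlinarith [norm_nonneg ℓ]

end A

section R
variable {s : ℝ} {ℓ : E →L[ℝ] ℂ} (hre : ∀ ξ, (ℓ ξ).re = 0) (hs0 : 0 < s) (hs1 : 2*s ≤ 1)
include hre

lemma rF_contDiffOn : ContDiffOn ℝ (⊤:ℕ∞) (rF s ℓ) (UU E) :=
  aF_contDiffOn.inv (fun ξ hξ => aF_ne hre (UU_ne hξ))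

lemma rF_fderivWithin {ξ : E} (hξ : ξ ∈ UU E) :
    fderivWithin ℝ (rF s ℓ) (UU E) ξ
      = (-(rF s ℓ ξ * rF s ℓ ξ)) • fderivWithin ℝ (aF s ℓ) (UU E) ξ := by
  have hd : HasFDerivWithinAt (aF s ℓ) (fderivWithin ℝ (aF s ℓ) (UU E) ξ) (UU E) ξ :=
    ((aF_contDiffOn.differentiableOn (by simp)) ξ hξ).hasFDerivWithinAt
  have hinv : HasDerivAt (fun y : ℂ => y⁻¹) (-((aF s ℓ ξ)^2)⁻¹) (aF s ℓ ξ) :=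
    hasDerivAt_inv (aF_ne hre (UU_ne hξ))
  have := hinv.comp_hasFDerivWithinAt ξ hd
  have heq : fderivWithin ℝ (rF s ℓ) (UU E) ξ
      = (-((aF s ℓ ξ)^2)⁻¹) • fderivWithin ℝ (aF s ℓ) (UU E) ξ :=
    this.fderivWithin (UU_ud ξ hξ)
  rw [heq]
  congr 1
  rw [sq, mul_inv]
  rfl

include hs0 hs1 in
lemma rF_iter_bound : ∀ m : ℕ, ∃ C : ℝ, 0 ≤ C ∧ ∀ j ≤ m, ∀ ξ ∈ UU E,
    ‖iteratedFDerivWithin ℝ j (rF s ℓ) (UU E) ξ‖ ≤ C * ‖ξ‖ ^ (-(2*s)*(j+1)) := by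
  intro m
  induction m with
  | zero =>
    refine ⟨1, zero_le_one, fun j hj ξ hξ => ?_⟩
    interval_cases j
    have h1 : (1:ℝ) < ‖ξ‖ := hξ
    have hpos : (0:ℝ) < ‖ξ‖ := lt_trans one_pos h1
    rw [norm_iteratedFDerivWithin_zero, one_mul]
    have e : -(2*s)*(((0:ℕ):ℝ)+1) = -(2*s) := by norm_num
    rw [e]
    have : ‖rF s ℓ ξ‖ = ‖aF s ℓ ξ‖⁻¹ := by rw [rF, norm_inv]
    rw [this, Real.rpow_neg hpos.le]
    refine inv_anti₀ ?_ (aF_lower hre ξ)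
    positivity
  | succ m IH =>
    obtain ⟨C₁, hC₁0, hC₁⟩ := IH
    obtain ⟨C₂, hC₂0, hC₂⟩ := A_iter_bound (ℓ := ℓ) hs0 hs1 m
    set S : ℝ := ∑ i ∈ Finset.range (m+1), ((m.choose i : ℕ) : ℝ)
      * (∑ i' ∈ Finset.range (i+1), ((i.choose i' : ℕ) : ℝ)) with hS
    have hS0 : 0 ≤ S := Finset.sum_nonneg fun i _ => by positivity
    refine ⟨max C₁ (S * (C₁ * C₁ * C₂)), le_max_of_le_left hC₁0, fun j hj ξ hξ => ?_⟩
    have h1 : (1:ℝ) < ‖ξ‖ := hξ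
    have hpos : (0:ℝ) < ‖ξ‖ := lt_trans one_pos h1
    have hrpj : (0:ℝ) ≤ ‖ξ‖ ^ (-(2*s)*(j+1)) := Real.rpow_nonneg hpos.le _
    rcases Nat.lt_or_ge j (m+1) with hjm | hjm
    · exact (hC₁ j (by omega) ξ hξ).trans (mul_le_mul_of_nonneg_right (le_max_left _ _) hrpj)
    have hj' : j = m+1 := by omega
    subst hj'
    rw [← norm_iteratedFDerivWithin_fderivWithin (UU_ud (E := E)) hξ]
    rw [iteratedFDerivWithin_congr (fun η hη => rF_fderivWithin hre hη) hξ m]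
    have hfm : ContDiffOn ℝ (⊤:ℕ∞) (fun η : E => -(rF s ℓ η * rF s ℓ η)) (UU E) :=
      ((rF_contDiffOn hre).mul (rF_contDiffOn hre)).neg
    have hgm : ContDiffOn ℝ (⊤:ℕ∞) (fderivWithin ℝ (aF s ℓ) (UU E)) (UU E) :=
      aF_contDiffOn.fderivWithin (UU_ud (E := E)) (by exact_mod_cast le_top)
    have lei := norm_iteratedFDerivWithin_smul_le (𝕜 := ℝ) (𝕜' := ℂ)
      (f := fun η : E => -(rF s ℓ η * rF s ℓ η))
      (g := fderivWithin ℝ (aF s ℓ) (UU E)) (n := m) hfm hgm (UU_ud (E := E)) hξ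
      (by exact_mod_cast le_top)
    refine le_trans lei ?_
    have hterm : ∀ i ∈ Finset.range (m+1),
        ((m.choose i : ℕ) : ℝ)
          * ‖iteratedFDerivWithin ℝ i (fun η : E => -(rF s ℓ η * rF s ℓ η)) (UU E) ξ‖
          * ‖iteratedFDerivWithin ℝ (m-i) (fderivWithin ℝ (aF s ℓ) (UU E)) (UU E) ξ‖
        ≤ (((m.choose i : ℕ) : ℝ) * (∑ i' ∈ Finset.range (i+1), ((i.choose i' : ℕ) : ℝ)))
          * ((C₁ * C₁ * C₂) * ‖ξ‖ ^ (-(2*s)*(((m+1:ℕ):ℝ)+1))) := by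
      intro i hi
      have him : i ≤ m := Nat.lt_succ_iff.mp (Finset.mem_range.mp hi)
      -- bound the product rF * rF
      have hprod : ‖iteratedFDerivWithin ℝ i (fun η : E => -(rF s ℓ η * rF s ℓ η)) (UU E) ξ‖
          ≤ (∑ i' ∈ Finset.range (i+1), ((i.choose i' : ℕ) : ℝ))
            * (C₁ * C₁ * ‖ξ‖ ^ (-(2*s)*(i+2))) := by
        have hneg : iteratedFDerivWithin ℝ i (fun η : E => -(rF s ℓ η * rF s ℓ η)) (UU E) ξ
            = -iteratedFDerivWithin ℝ i (fun η : E => rF s ℓ η * rF s ℓ η) (UU E) ξ :=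
          iteratedFDerivWithin_neg_apply (UU_ud (E := E)) hξ
        rw [hneg, norm_neg]
        have lei2 := norm_iteratedFDerivWithin_mul_le (𝕜 := ℝ) (f := rF s ℓ) (g := rF s ℓ)
          (n := i) (rF_contDiffOn hre) (rF_contDiffOn hre) (UU_ud (E := E)) hξ
          (by exact_mod_cast le_top)
        refine le_trans lei2 ?_
        have hterm2 : ∀ i' ∈ Finset.range (i+1),
            ((i.choose i' : ℕ) : ℝ) * ‖iteratedFDerivWithin ℝ i' (rF s ℓ) (UU E) ξ‖
              * ‖iteratedFDerivWithin ℝ (i-i') (rF s ℓ) (UU E) ξ‖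
            ≤ ((i.choose i' : ℕ) : ℝ) * ((C₁ * C₁) * ‖ξ‖ ^ (-(2*s)*(i+2))) := by
          intro i' hi'
          have hii : i' ≤ i := Nat.lt_succ_iff.mp (Finset.mem_range.mp hi')
          have b1 := hC₁ i' (by omega) ξ hξ
          have b2 := hC₁ (i-i') (by omega) ξ hξ
          have hcomb : (C₁ * ‖ξ‖ ^ (-(2*s)*(i'+1))) * (C₁ * ‖ξ‖ ^ (-(2*s)*((i-i':ℕ)+1)))
              = (C₁ * C₁) * ‖ξ‖ ^ (-(2*s)*(i+2)) := by
            have hcast : ((i-i':ℕ):ℝ) = (i:ℝ) - (i':ℝ) := by rw [Nat.cast_sub hii]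
            have hsum : (-(2*s)*((i':ℝ)+1)) + (-(2*s)*(((i-i':ℕ):ℝ)+1)) = -(2*s)*((i:ℝ)+2) := by
              rw [hcast]; ring
            calc (C₁ * ‖ξ‖ ^ (-(2*s)*((i':ℝ)+1))) * (C₁ * ‖ξ‖ ^ (-(2*s)*(((i-i':ℕ):ℝ)+1)))
                = (C₁ * C₁) * (‖ξ‖ ^ (-(2*s)*((i':ℝ)+1)) * ‖ξ‖ ^ (-(2*s)*(((i-i':ℕ):ℝ)+1))) := by
                  ring
            _ = (C₁ * C₁) * ‖ξ‖ ^ (-(2*s)*((i:ℝ)+2)) := by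
                  rw [← Real.rpow_add hpos, hsum]
          calc ((i.choose i' : ℕ) : ℝ) * ‖iteratedFDerivWithin ℝ i' (rF s ℓ) (UU E) ξ‖
              * ‖iteratedFDerivWithin ℝ (i-i') (rF s ℓ) (UU E) ξ‖
              ≤ ((i.choose i' : ℕ) : ℝ) * (C₁ * ‖ξ‖ ^ (-(2*s)*(i'+1)))
                * (C₁ * ‖ξ‖ ^ (-(2*s)*((i-i':ℕ)+1))) := by
                apply mul_le_mul
                · exact mul_le_mul_of_nonneg_left b1 (by positivity)
                · exact b2
                · exact norm_nonneg _
                · positivity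
          _ = ((i.choose i' : ℕ) : ℝ) * ((C₁ * C₁) * ‖ξ‖ ^ (-(2*s)*(i+2))) := by
                rw [mul_assoc, hcomb]
        refine le_trans (Finset.sum_le_sum hterm2) ?_
        rw [← Finset.sum_mul]
      have hA : ‖iteratedFDerivWithin ℝ (m-i) (fderivWithin ℝ (aF s ℓ) (UU E)) (UU E) ξ‖
          ≤ C₂ * ‖ξ‖ ^ (-(2*s)*((m-i:ℕ))) := hC₂ (m-i) (by omega) ξ hξ
      have hcomb2 : ‖ξ‖ ^ (-(2*s)*(i+2)) * ‖ξ‖ ^ (-(2*s)*((m-i:ℕ)))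
          = ‖ξ‖ ^ (-(2*s)*(((m+1:ℕ):ℝ)+1)) := by
        rw [← Real.rpow_add hpos]
        congr 1
        have hcast : ((m-i:ℕ):ℝ) = (m:ℝ) - (i:ℝ) := by rw [Nat.cast_sub him]
        rw [hcast]
        push_cast
        ring
      calc ((m.choose i : ℕ) : ℝ)
          * ‖iteratedFDerivWithin ℝ i (fun η : E => -(rF s ℓ η * rF s ℓ η)) (UU E) ξ‖
          * ‖iteratedFDerivWithin ℝ (m-i) (fderivWithin ℝ (aF s ℓ) (UU E)) (UU E) ξ‖
          ≤ ((m.choose i : ℕ) : ℝ) * ((∑ i' ∈ Finset.range (i+1), ((i.choose i' : ℕ) : ℝ))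
              * (C₁ * C₁ * ‖ξ‖ ^ (-(2*s)*(i+2))))
            * (C₂ * ‖ξ‖ ^ (-(2*s)*((m-i:ℕ)))) := by
            apply mul_le_mul
            · exact mul_le_mul_of_nonneg_left hprod (by positivity)
            · exact hA
            · exact norm_nonneg _
            · positivity
      _ = (((m.choose i : ℕ) : ℝ) * (∑ i' ∈ Finset.range (i+1), ((i.choose i' : ℕ) : ℝ)))
            * ((C₁ * C₁ * C₂) * ‖ξ‖ ^ (-(2*s)*(((m+1:ℕ):ℝ)+1))) := by
            rw [← hcomb2]
            ring
    refine le_trans (Finset.sum_le_sum hterm) ?_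
    rw [← Finset.sum_mul, ← hS]
    have : S * ((C₁ * C₁ * C₂) * ‖ξ‖ ^ (-(2*s)*(((m+1:ℕ):ℝ)+1)))
        = (S * (C₁ * C₁ * C₂)) * ‖ξ‖ ^ (-(2*s)*(((m+1:ℕ):ℝ)+1)) := by ring
    rw [this]
    exact mul_le_mul_of_nonneg_right (le_max_right _ _) (Real.rpow_nonneg hpos.le _)

end R

end SymbAux2
end



open SymbAux2

/-- For `s ∈ (0,1/2)`, `b > 0`, and `φ` a smooth cut-off vanishing for `|ξ| < 1` and equal
to `1` for `|ξ| > 2`, the symbol `q(ξ) = φ(ξ)/(|ξ|^{2s} + i b ξ_n)` is smooth and lies in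
the Hörmander class `S^{-2s}_{2s,0}`: for every `m` there is `C_m` with
`‖D^m q(ξ)‖ ≤ C_m (1+|ξ|)^{-2s-2sm}` for all `ξ`. -/
theorem stmt_16 (n : ℕ) (s b : ℝ) (hs0 : 0 < s) (hs2 : s < 1 / 2) (hb : 0 < b)
    (φ : EuclideanSpace ℝ (Fin (n + 1)) → ℝ)
    (hφ : ContDiff ℝ (⊤ : ℕ∞) φ)
    (hφ01 : ∀ ξ, φ ξ ∈ Set.Icc (0 : ℝ) 1)
    (hφ0 : ∀ ξ : EuclideanSpace ℝ (Fin (n + 1)), ‖ξ‖ < 1 → φ ξ = 0)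
    (hφ1 : ∀ ξ : EuclideanSpace ℝ (Fin (n + 1)), 2 < ‖ξ‖ → φ ξ = 1) :
    ContDiff ℝ (⊤ : ℕ∞) (constDriftParametrix s b φ) ∧
    ∀ m : ℕ, ∃ C : ℝ, ∀ ξ : EuclideanSpace ℝ (Fin (n + 1)),
      ‖iteratedFDeriv ℝ m (constDriftParametrix s b φ) ξ‖
        ≤ C * (1 + ‖ξ‖) ^ (-(2 * s) - 2 * s * (m : ℝ)) := by
  let E := EuclideanSpace ℝ (Fin (n + 1))
  let ℓ : E →L[ℝ] ℂ :=
    (EuclideanSpace.proj (Fin.last n) : E →L[ℝ] ℝ).smulRight (Complex.I * (b:ℂ))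
  have hℓapp : ∀ ξ : E, ℓ ξ = (ξ (Fin.last n) : ℝ) • (Complex.I * (b:ℂ)) := fun ξ => rfl
  have hre : ∀ ξ : E, (ℓ ξ).re = 0 := by
    intro ξ
    rw [hℓapp ξ]
    simp [Complex.real_smul, Complex.mul_re]
  have hs1 : 2 * s ≤ 1 := by linarith
  -- identification of the symbol with φ/aF
  have hqeq : constDriftParametrix s b φ = fun ξ : E => ((φ ξ : ℝ) : ℂ) / aF s ℓ ξ := by
    funext ξ
    have hden : (((‖ξ‖ ^ (2 * s) : ℝ) : ℂ) + Complex.I * (b : ℂ) * ((ξ (Fin.last n) : ℝ) : ℂ))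
        = aF s ℓ ξ := by
      have h1 : (‖ξ‖ ^ (2 * s) : ℝ) = Ft s ξ := (Ft_rpow ξ s).symm
      have h2 : ℓ ξ = Complex.I * (b : ℂ) * ((ξ (Fin.last n) : ℝ) : ℂ) := by
        rw [hℓapp ξ, Complex.real_smul]
        ring
      rw [aF, ← h1, ← h2]
    rw [constDriftParametrix, hden]
  -- smoothness
  have hsmooth : ContDiff ℝ (⊤ : ℕ∞) (constDriftParametrix s b φ) := by
    rw [hqeq, contDiff_iff_contDiffAt]
    intro ξ₀
    rcases lt_or_ge ‖ξ₀‖ 1 with hlt | hge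
    · -- locally zero
      have hev : (fun ξ : E => ((φ ξ : ℝ) : ℂ) / aF s ℓ ξ) =ᶠ[nhds ξ₀] (fun _ => (0:ℂ)) := by
        have hopen : IsOpen {ξ : E | ‖ξ‖ < 1} := isOpen_lt continuous_norm continuous_const
        refine Filter.eventually_of_mem (hopen.mem_nhds hlt) (fun ξ hξ => ?_)
        show ((φ ξ : ℝ) : ℂ) / aF s ℓ ξ = 0
        rw [hφ0 ξ hξ]
        simp
      exact (contDiffAt_const (c := (0:ℂ))).congr_of_eventuallyEq hev
    · have hξ0 : ξ₀ ≠ 0 := by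
        intro h0; rw [h0, norm_zero] at hge; linarith
      have hFt : ContDiffAt ℝ (⊤:ℕ∞) (Ft s : E → ℝ) ξ₀ := by
        refine ((contDiff_norm_sq ℝ).contDiffAt).rpow_const_of_ne ?_
        have : (0:ℝ) < ‖ξ₀‖ := norm_pos_iff.mpr hξ0
        positivity
      have haAt : ContDiffAt ℝ (⊤:ℕ∞) (aF s ℓ : E → ℂ) ξ₀ := by
        refine ContDiffAt.add ?_ ℓ.contDiff.contDiffAt
        exact Complex.ofRealCLM.contDiff.contDiffAt.comp ξ₀ hFt
      have hdivrw : (fun ξ : E => ((φ ξ : ℝ) : ℂ) / aF s ℓ ξ)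
          = fun ξ : E => ((φ ξ : ℝ) : ℂ) * (aF s ℓ ξ)⁻¹ := by
        funext ξ; rw [div_eq_mul_inv]
      rw [hdivrw]
      exact ContDiffAt.mul (Complex.ofRealCLM.contDiff.contDiffAt.comp ξ₀ hφ.contDiffAt)
        (haAt.inv (aF_ne hre hξ0))
  refine ⟨hsmooth, ?_⟩
  intro m
  obtain ⟨C, hC0, hC⟩ := rF_iter_bound (E := E) (s := s) (ℓ := ℓ) hre hs0 hs1 m
  set e : ℝ := -(2 * s) - 2 * s * (m : ℝ) with he
  have he0 : e ≤ 0 := by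
    have : (0:ℝ) ≤ (m:ℝ) := Nat.cast_nonneg m
    nlinarith
  -- compact part
  have hcont : Continuous fun ξ : E => ‖iteratedFDeriv ℝ m (constDriftParametrix s b φ) ξ‖ :=
    (hsmooth.continuous_iteratedFDeriv (by exact_mod_cast le_top)).norm
  obtain ⟨M, hzmax⟩ := (isCompact_closedBall (0:E) 2).exists_bound_of_continuousOn
    ((hsmooth.continuous_iteratedFDeriv (m := m) (by exact_mod_cast le_top)).continuousOn)
  have hM0 : 0 ≤ M := le_trans (norm_nonneg _) (hzmax 0 (by simp))
  refine ⟨max (M * 3 ^ (-e)) (C * 2 ^ (-e)), fun ξ => ?_⟩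
  have h1ξ : (0:ℝ) < 1 + ‖ξ‖ := by positivity
  have hrpos : (0:ℝ) < (1 + ‖ξ‖) ^ e := Real.rpow_pos_of_pos h1ξ e
  rcases le_or_gt ‖ξ‖ 2 with hle | hgt
  · -- compact region
    have hball : ξ ∈ Metric.closedBall (0:E) 2 := by
      simpa [Metric.mem_closedBall, dist_eq_norm] using hle
    have hMle : ‖iteratedFDeriv ℝ m (constDriftParametrix s b φ) ξ‖ ≤ M := hzmax ξ hball
    have h3 : (3:ℝ) ^ e ≤ (1 + ‖ξ‖) ^ e :=
      Real.rpow_le_rpow_of_nonpos h1ξ (by linarith) he0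
    have hmul : M = (M * 3 ^ (-e)) * 3 ^ e := by
      rw [mul_assoc, ← Real.rpow_add (by norm_num : (0:ℝ) < 3)]
      simp
    calc ‖iteratedFDeriv ℝ m (constDriftParametrix s b φ) ξ‖ ≤ M := hMle
    _ = (M * 3 ^ (-e)) * 3 ^ e := hmul
    _ ≤ (M * 3 ^ (-e)) * (1 + ‖ξ‖) ^ e := by
        refine mul_le_mul_of_nonneg_left h3 ?_
        positivity
    _ ≤ max (M * 3 ^ (-e)) (C * 2 ^ (-e)) * (1 + ‖ξ‖) ^ e :=
        mul_le_mul_of_nonneg_right (le_max_left _ _) hrpos.le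
  · -- symbol region
    have hξU : ξ ∈ UU E := by
      show (1:ℝ) < ‖ξ‖
      linarith
    have hev : constDriftParametrix s b φ =ᶠ[nhds ξ] rF s ℓ := by
      have hopen : IsOpen {η : E | 2 < ‖η‖} := isOpen_lt continuous_const continuous_norm
      refine Filter.eventually_of_mem (hopen.mem_nhds hgt) (fun η hη => ?_)
      rw [hqeq]
      show ((φ η : ℝ) : ℂ) / aF s ℓ η = rF s ℓ η
      rw [hφ1 η hη]
      simp [rF, one_div]
    have hiter : iteratedFDeriv ℝ m (constDriftParametrix s b φ) ξ
        = iteratedFDeriv ℝ m (rF s ℓ) ξ := by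
      rw [← iteratedFDerivWithin_univ, ← iteratedFDerivWithin_univ]
      exact Filter.EventuallyEq.iteratedFDerivWithin_eq
        (hev.filter_mono nhdsWithin_le_nhds) hev.self_of_nhds m
    have hwithin : iteratedFDeriv ℝ m (rF s ℓ) ξ
        = iteratedFDerivWithin ℝ m (rF s ℓ) (UU E) ξ :=
      (iteratedFDerivWithin_of_isOpen m UU_open hξU).symm
    have hbound : ‖iteratedFDerivWithin ℝ m (rF s ℓ) (UU E) ξ‖ ≤ C * ‖ξ‖ ^ e := by
      have := hC m le_rfl ξ hξU
      have hee : -(2*s)*((m:ℝ)+1) = e := by rw [he]; ring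
      rwa [hee] at this
    have hpos : (0:ℝ) < ‖ξ‖ := by linarith
    have hcmp : ‖ξ‖ ^ e ≤ 2 ^ (-e) * (1 + ‖ξ‖) ^ e := by
      have h2ξ : (1 + ‖ξ‖) ≤ 2 * ‖ξ‖ := by linarith
      have h4 : (2 * ‖ξ‖) ^ e ≤ (1 + ‖ξ‖) ^ e :=
        Real.rpow_le_rpow_of_nonpos h1ξ h2ξ he0
      have h5 : (2 * ‖ξ‖) ^ e = 2 ^ e * ‖ξ‖ ^ e :=
        Real.mul_rpow (by norm_num) hpos.le
      have h6 : ‖ξ‖ ^ e = 2 ^ (-e) * (2 ^ e * ‖ξ‖ ^ e) := by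
        rw [← mul_assoc, ← Real.rpow_add (by norm_num : (0:ℝ) < 2)]
        simp
      rw [h6, ← h5]
      exact mul_le_mul_of_nonneg_left h4 (by positivity)
    calc ‖iteratedFDeriv ℝ m (constDriftParametrix s b φ) ξ‖
        = ‖iteratedFDerivWithin ℝ m (rF s ℓ) (UU E) ξ‖ := by rw [hiter, hwithin]
    _ ≤ C * ‖ξ‖ ^ e := hbound
    _ ≤ C * (2 ^ (-e) * (1 + ‖ξ‖) ^ e) := mul_le_mul_of_nonneg_left hcmp hC0
    _ = (C * 2 ^ (-e)) * (1 + ‖ξ‖) ^ e := by ring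
    _ ≤ max (M * 3 ^ (-e)) (C * 2 ^ (-e)) * (1 + ‖ξ‖) ^ e :=
        mul_le_mul_of_nonneg_right (le_max_right _ _) hrpos.le
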